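/- Let n be an odd positive integer and let k be an integer with 0 ≤ k ≤ n−1. Then D_{n,k} = R_{n,k}, i.e., the signed Eulerian number equals the difference between the number of even parity-alternate permutations and the number of odd parity-alternate permutations of [n] with exactly k ascents. -/

import Mathlib

open Finset

/-- Number of ascents of a permutation of `[n]` (positions `i` with `a_i < a_{i+1}`). -/
def ascents {n : ℕ} (A : Equiv.Perm (Fin n)) : ℕ :=
  (univ.filter fun i : Fin n => ∃ h : i.val + 1 < n, A i < A ⟨i.val + 1, h⟩).card

/-- Number of inversions of a permutation. -/
def invNum {n : ℕ} (A : Equiv.Perm (Fin n)) : ℕ :=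
  (univ.filter fun p : Fin n × Fin n => p.1 < p.2 ∧ A p.2 < A p.1).card

/-- A permutation is parity-alternate if consecutive entries have different parity. -/
def IsPAP {n : ℕ} (A : Equiv.Perm (Fin n)) : Prop :=
  ∀ i : Fin n, ∀ h : i.val + 1 < n, (A i).val % 2 ≠ (A ⟨i.val + 1, h⟩).val % 2

instance {n : ℕ} (A : Equiv.Perm (Fin n)) : Decidable (IsPAP A) := by
  unfold IsPAP; infer_instance

/-- `P_{n,k}`: number of even parity-alternate permutations of `[n]` with `k` ascents. -/
def papEven (n k : ℕ) : ℕ :=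
  (univ.filter fun A : Equiv.Perm (Fin n) => IsPAP A ∧ ascents A = k ∧ Even (invNum A)).card

/-- `Q_{n,k}`: number of odd parity-alternate permutations of `[n]` with `k` ascents. -/
def papOdd (n k : ℕ) : ℕ :=
  (univ.filter fun A : Equiv.Perm (Fin n) => IsPAP A ∧ ascents A = k ∧ Odd (invNum A)).card

/-- `S_{n,k}`: number of parity-alternate permutations of `[n]` with `k` ascents. -/
def papTotal (n k : ℕ) : ℕ :=
  (univ.filter fun A : Equiv.Perm (Fin n) => IsPAP A ∧ ascents A = k).card

/-- `R_{n,k} = P_{n,k} - Q_{n,k}`. -/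
def papSigned (n k : ℕ) : ℤ := (papEven n k : ℤ) - papOdd n k

/-- `B_{n,k}`: number of even permutations of `[n]` with `k` ascents. -/
def eulerEven (n k : ℕ) : ℕ :=
  (univ.filter fun A : Equiv.Perm (Fin n) => ascents A = k ∧ Even (invNum A)).card

/-- `C_{n,k}`: number of odd permutations of `[n]` with `k` ascents. -/
def eulerOdd (n k : ℕ) : ℕ :=
  (univ.filter fun A : Equiv.Perm (Fin n) => ascents A = k ∧ Odd (invNum A)).card

/-- `D_{n,k} = B_{n,k} - C_{n,k}`: the signed Eulerian number. -/
def eulerSigned (n k : ℕ) : ℤ := (eulerEven n k : ℤ) - eulerOdd n k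

section
variable {n m : ℕ}

/-- values located at even indices -/
def myUpos (A : Equiv.Perm (Fin n)) : Finset ℕ :=
  ((Finset.univ : Finset (Fin n)).filter fun i => i.val % 2 = 0).image fun i => (A i).val

lemma mem_myUpos {A : Equiv.Perm (Fin n)} {x : ℕ} :
    x ∈ myUpos A ↔ ∃ i : Fin n, i.val % 2 = 0 ∧ (A i).val = x := by
  simp [myUpos]

lemma mem_myUpos_lt {A : Equiv.Perm (Fin n)} {x : ℕ} (h : x ∈ myUpos A) : x < n := by
  obtain ⟨i, _, hi⟩ := mem_myUpos.mp h
  exact hi ▸ (A i).isLt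

lemma mem_myUpos_iff_inv {A : Equiv.Perm (Fin n)} {u : Fin n} :
    u.val ∈ myUpos A ↔ (A⁻¹ u).val % 2 = 0 := by
  constructor
  · rintro h
    obtain ⟨i, hpar, hval⟩ := mem_myUpos.mp h
    have : A i = u := Fin.ext hval
    rw [← this, Equiv.Perm.inv_def, Equiv.symm_apply_apply]
    exact hpar
  · intro h
    exact mem_myUpos.mpr ⟨A⁻¹ u, h, by simp⟩

lemma myUpos_card (A : Equiv.Perm (Fin n)) :
    (myUpos A).card
      = ((Finset.univ : Finset (Fin n)).filter fun i => i.val % 2 = 0).card := by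
  apply Finset.card_image_of_injOn
  intro a _ b _ h
  exact A.injective (Fin.ext h)

lemma range_filter_even_card (N : ℕ) :
    ((Finset.range N).filter fun x => x % 2 = 0).card = (N + 1) / 2 := by
  induction N with
  | zero => simp
  | succ N ih =>
    rw [Finset.range_add_one, Finset.filter_insert]
    by_cases h : N % 2 = 0
    · rw [if_pos h, Finset.card_insert_of_notMem (by simp), ih]; omega
    · rw [if_neg h, ih]; omega

lemma range_filter_odd_card (N : ℕ) :
    ((Finset.range N).filter fun x => x % 2 = 1).card = N / 2 := by
  induction N with
  | zero => simp
  | succ N ih =>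
    rw [Finset.range_add_one, Finset.filter_insert]
    by_cases h : N % 2 = 1
    · rw [if_pos h, Finset.card_insert_of_notMem (by simp), ih]; omega
    · rw [if_neg h, ih]; omega

lemma fin_filter_card (p : ℕ → Prop) [DecidablePred p] :
    ((Finset.univ : Finset (Fin n)).filter fun i => p i.val).card
      = ((Finset.range n).filter p).card := by
  apply Finset.card_bij (fun a _ => a.val)
  · intro a ha
    simp only [Finset.mem_filter, Finset.mem_univ, true_and] at ha
    simp [Finset.mem_filter, Finset.mem_range, a.isLt, ha]
  · intro a _ b _ h
    exact Fin.ext h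
  · intro b hb
    simp only [Finset.mem_filter, Finset.mem_range] at hb
    exact ⟨⟨b, hb.1⟩, by simp [hb.2], rfl⟩

lemma myUpos_card' (hnm : n = 2 * m + 1) (A : Equiv.Perm (Fin n)) :
    (myUpos A).card = m + 1 := by
  rw [myUpos_card, fin_filter_card (fun x => x % 2 = 0), range_filter_even_card]
  omega

/-- from IsPAP : parity of entries alternates starting from entry 0 -/
lemma isPAP_alt {A : Equiv.Perm (Fin n)} (h : IsPAP A) (hn0 : 0 < n) :
    ∀ k (hk : k < n), (A ⟨k, hk⟩).val % 2 = ((A ⟨0, hn0⟩).val + k) % 2 := by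
  intro k
  induction k with
  | zero => intro hk; simp
  | succ j ih =>
    intro hk
    have hj : j < n := by omega
    have hne : (A ⟨j, hj⟩).val % 2 ≠ (A ⟨j + 1, hk⟩).val % 2 :=
      h ⟨j, hj⟩ (by simpa using hk)
    have := ih hj
    omega

lemma isPAP_parity (hnm : n = 2 * m + 1) {A : Equiv.Perm (Fin n)} (h : IsPAP A) :
    ∀ i : Fin n, (A i).val % 2 = i.val % 2 := by
  have hn0 : 0 < n := by omega
  have halt := isPAP_alt h hn0
  have h0 : (A ⟨0, hn0⟩).val % 2 = 0 := by
    by_contra h0'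
    have h0'' : (A ⟨0, hn0⟩).val % 2 = 1 := by omega
    have hsub : myUpos A ⊆ (Finset.range n).filter fun x => x % 2 = 1 := by
      intro x hx
      obtain ⟨i, hpar, hval⟩ := mem_myUpos.mp hx
      have := halt i.val i.isLt
      simp only [Fin.eta] at this
      rw [Finset.mem_filter, Finset.mem_range]
      refine ⟨mem_myUpos_lt hx, ?_⟩
      omega
    have hcard := Finset.card_le_card hsub
    rw [myUpos_card' hnm, range_filter_odd_card] at hcard
    omega
  intro i
  have := halt i.val i.isLt
  simp only [Fin.eta] at this
  omega

lemma isPAP_myUpos (hnm : n = 2 * m + 1) {A : Equiv.Perm (Fin n)} (h : IsPAP A) :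
    myUpos A = (Finset.range n).filter fun x => x % 2 = 0 := by
  have hp := isPAP_parity hnm h
  ext x
  rw [mem_myUpos, Finset.mem_filter, Finset.mem_range]
  constructor
  · rintro ⟨i, hpar, hval⟩
    have := hp i
    exact ⟨hval ▸ (A i).isLt, by omega⟩
  · rintro ⟨hx, hpar⟩
    refine ⟨A⁻¹ ⟨x, hx⟩, ?_, by simp⟩
    have := hp (A⁻¹ ⟨x, hx⟩)
    rw [show A (A⁻¹ ⟨x, hx⟩) = ⟨x, hx⟩ from A.apply_symm_apply _] at this
    have hval : ((⟨x, hx⟩ : Fin n)).val = x := rfl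
    rw [hval] at this
    omega

lemma myUpos_isPAP (hnm : n = 2 * m + 1) {A : Equiv.Perm (Fin n)}
    (hU : myUpos A = (Finset.range n).filter fun x => x % 2 = 0) : IsPAP A := by
  have key : ∀ i : Fin n, (A i).val % 2 = i.val % 2 := by
    intro i
    have hmem : (A i).val ∈ myUpos A ↔ i.val % 2 = 0 := by
      rw [mem_myUpos]
      constructor
      · rintro ⟨j, hpar, hval⟩
        have : A j = A i := Fin.ext hval
        have : j = i := A.injective this
        omega
      · intro h
        exact ⟨i, h, rfl⟩
    rw [hU, Finset.mem_filter, Finset.mem_range] at hmem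
    have hlt := (A i).isLt
    by_cases hi : i.val % 2 = 0
    · have := hmem.mpr hi
      omega
    · by_cases ha : (A i).val % 2 = 0
      · have := hmem.mp ⟨hlt, ha⟩
        omega
      · omega
  intro i hlt
  have h1 := key i
  have h2 := key ⟨i.val + 1, hlt⟩
  simp only [] at h2
  omega

lemma exists_consec (hnm : n = 2 * m + 1) {A : Equiv.Perm (Fin n)} (h : ¬IsPAP A) :
    ∃ x, x ∈ myUpos A ∧ x + 1 ∈ myUpos A := by
  by_contra hc
  push_neg at hc
  apply h
  apply myUpos_isPAP hnm
  set U := myUpos A with hUdef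
  set evens := (Finset.range n).filter fun x => x % 2 = 0 with hEdef
  have hcardE : evens.card = m + 1 := by
    rw [hEdef, range_filter_even_card]; omega
  have hcardU : U.card = m + 1 := myUpos_card' hnm A
  -- the map x ↦ x or x+1 into evens
  have himg : U.image (fun x => if x % 2 = 0 then x else x + 1) = evens := by
    apply Finset.eq_of_subset_of_card_le
    · intro y hy
      simp only [Finset.mem_image] at hy
      obtain ⟨x, hx, hfx⟩ := hy
      have hxlt : x < n := mem_myUpos_lt hx
      rw [hEdef, Finset.mem_filter, Finset.mem_range]
      by_cases hpar : x % 2 = 0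
      · rw [if_pos hpar] at hfx; omega
      · rw [if_neg hpar] at hfx
        -- x odd, x < n = 2m+1 so x ≤ 2m-1, x+1 ≤ 2m < n
        omega
    · rw [hcardE]
      rw [← hcardU]
      apply le_of_eq
      symm
      apply Finset.card_image_of_injOn
      intro x hx y hy hf
      simp only [] at hf
      by_cases hx2 : x % 2 = 0 <;> by_cases hy2 : y % 2 = 0
      · rwa [if_pos hx2, if_pos hy2] at hf
      · rw [if_pos hx2, if_neg hy2] at hf
        exact absurd (hf ▸ hx) (hc y hy)
      · rw [if_neg hx2, if_pos hy2] at hf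
        exact absurd (hf.symm ▸ hy) (hc x hx)
      · rw [if_neg hx2, if_neg hy2] at hf; omega
  -- evens ⊆ U by induction
  have hsub : ∀ j, j ≤ m → 2 * j ∈ U := by
    intro j
    induction j with
    | zero =>
      intro _
      have h0 : (0:ℕ) ∈ evens := by
        rw [hEdef, Finset.mem_filter, Finset.mem_range]; omega
      rw [← himg, Finset.mem_image] at h0
      obtain ⟨x, hx, hfx⟩ := h0
      by_cases hpar : x % 2 = 0
      · rw [if_pos hpar] at hfx
        have hx0 : (2 * 0 : ℕ) = x := by omega
        rw [hx0]; exact hx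
      · rw [if_neg hpar] at hfx; omega
    | succ j ih =>
      intro hj
      have h0 : (2 * (j+1) : ℕ) ∈ evens := by
        rw [hEdef, Finset.mem_filter, Finset.mem_range]; omega
      rw [← himg, Finset.mem_image] at h0
      obtain ⟨x, hx, hfx⟩ := h0
      by_cases hpar : x % 2 = 0
      · rw [if_pos hpar] at hfx
        have : x = 2 * (j+1) := hfx
        rwa [← this]
      · rw [if_neg hpar] at hfx
        -- x + 1 = 2(j+1), x = 2j+1
        have hx' : x = 2 * j + 1 := by omega
        have h2j : 2 * j ∈ U := ih (by omega)
        have : 2 * j + 1 ∈ U := hx' ▸ hx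
        exact absurd this (hc (2 * j) h2j)
  have hsub' : evens ⊆ U := by
    intro x hx
    rw [hEdef, Finset.mem_filter, Finset.mem_range] at hx
    have : x = 2 * (x / 2) := by omega
    rw [this]
    exact hsub (x / 2) (by omega)
  exact (Finset.eq_of_subset_of_card_le hsub' (by omega)).symm

end
lemma swap_lt_iff {n : ℕ} (u v x y : Fin n) (hv : v.val = u.val + 1)
    (h1 : ¬(x = u ∧ y = v)) (h2 : ¬(x = v ∧ y = u)) :
    Equiv.swap u v x < Equiv.swap u v y ↔ x < y := by
  rw [Equiv.swap_apply_def, Equiv.swap_apply_def]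
  simp only [Fin.lt_def, Fin.ext_iff] at *
  split_ifs <;> omega

lemma apply_eq_of_val {n : ℕ} (A : Equiv.Perm (Fin n)) {i u : Fin n}
    (h : A i = u) : A⁻¹ u = i := by
  rw [← h, Equiv.Perm.inv_def, Equiv.symm_apply_apply]

lemma ascents_swap {n : ℕ} (A : Equiv.Perm (Fin n)) (u v : Fin n)
    (hv : v.val = u.val + 1)
    (hpu : (A⁻¹ u).val % 2 = 0) (hpv : (A⁻¹ v).val % 2 = 0) :
    ascents (Equiv.swap u v * A) = ascents A := by
  unfold ascents
  congr 1
  apply Finset.filter_congr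
  intro i _
  apply exists_congr
  intro h
  have hmk : ((⟨i.val + 1, h⟩ : Fin n)).val = i.val + 1 := rfl
  simp only [Equiv.Perm.mul_apply]
  apply swap_lt_iff _ _ _ _ hv
  · rintro ⟨ha, hb⟩
    rw [apply_eq_of_val A ha] at hpu
    rw [apply_eq_of_val A hb, hmk] at hpv
    omega
  · rintro ⟨ha, hb⟩
    rw [apply_eq_of_val A ha] at hpv
    rw [apply_eq_of_val A hb, hmk] at hpu
    omega

lemma invNum_swap_parity {n : ℕ} (A : Equiv.Perm (Fin n)) (u v : Fin n)
    (hv : v.val = u.val + 1)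
    (hpu : (A⁻¹ u).val % 2 = 0) (hpv : (A⁻¹ v).val % 2 = 0) :
    Odd (invNum (Equiv.swap u v * A) + invNum A) := by
  have huv : u ≠ v := by
    intro h; rw [h] at hv; omega
  have huv_lt : u < v := by rw [Fin.lt_def]; omega
  have hPQ : A⁻¹ u ≠ A⁻¹ v := fun h => huv (A⁻¹.injective h)
  set P := A⁻¹ u with hP
  set Q := A⁻¹ v with hQ
  have hAP : A P = u := A.apply_symm_apply u
  have hAQ : A Q = v := A.apply_symm_apply v
  obtain ⟨e, he12, hem⟩ : ∃ e : Fin n × Fin n, e.1 < e.2 ∧ (e = (P, Q) ∨ e = (Q, P)) := by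
    rcases lt_or_gt_of_ne hPQ with h | h
    · exact ⟨(P, Q), h, Or.inl rfl⟩
    · exact ⟨(Q, P), h, Or.inr rfl⟩
  unfold invNum
  rw [Finset.card_filter, Finset.card_filter, ← Finset.sum_add_distrib,
    ← Finset.sum_erase_add _ _ (Finset.mem_univ e)]
  have hterm : (if e.1 < e.2 ∧ (Equiv.swap u v * A) e.2 < (Equiv.swap u v * A) e.1 then 1 else 0)
      + (if e.1 < e.2 ∧ A e.2 < A e.1 then (1:ℕ) else 0) = 1 := by
    rcases hem with rfl | rfl
    · simp only [Equiv.Perm.mul_apply, hAP, hAQ, Equiv.swap_apply_left, Equiv.swap_apply_right]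
      rw [if_pos ⟨he12, huv_lt⟩, if_neg]
      rintro ⟨-, hlt⟩
      exact absurd hlt (not_lt.mpr (le_of_lt huv_lt))
    · simp only [Equiv.Perm.mul_apply, hAP, hAQ, Equiv.swap_apply_left, Equiv.swap_apply_right]
      rw [if_neg, if_pos ⟨he12, huv_lt⟩]
      rintro ⟨-, hlt⟩
      exact absurd hlt (not_lt.mpr (le_of_lt huv_lt))
  rw [hterm]
  apply Even.add_one
  apply Finset.even_sum
  intro p hp
  have hpne : p ≠ e := Finset.ne_of_mem_erase hp
  by_cases hp12 : p.1 < p.2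
  · have hiff : ((Equiv.swap u v * A) p.2 < (Equiv.swap u v * A) p.1 ↔ A p.2 < A p.1) := by
      simp only [Equiv.Perm.mul_apply]
      apply swap_lt_iff _ _ _ _ hv
      · rintro ⟨ha, hb⟩
        -- A p.2 = u, A p.1 = v : p.2 = P, p.1 = Q
        have h1 : P = p.2 := apply_eq_of_val A ha
        have h2 : Q = p.1 := apply_eq_of_val A hb
        rcases hem with rfl | rfl
        · exact absurd (h1 ▸ h2 ▸ hp12 : (P, Q).2 < (P, Q).1) (not_lt.mpr (le_of_lt he12))
        · exact hpne (Prod.ext h2.symm h1.symm)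
      · rintro ⟨ha, hb⟩
        have h1 : Q = p.2 := apply_eq_of_val A ha
        have h2 : P = p.1 := apply_eq_of_val A hb
        rcases hem with rfl | rfl
        · exact hpne (Prod.ext h2.symm h1.symm)
        · exact absurd (h2 ▸ h1 ▸ hp12 : (Q, P).2 < (Q, P).1) (not_lt.mpr (le_of_lt he12))
    rw [if_congr (and_congr_right fun _ => hiff) rfl rfl]
    exact ⟨_, rfl⟩
  · rw [if_neg (fun hc => hp12 hc.1), if_neg (fun hc => hp12 hc.1)]
    exact Even.zero
lemma myUpos_swap_subset {n : ℕ} (A : Equiv.Perm (Fin n)) (u v : Fin n)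
    (hu : u.val ∈ myUpos A) (hv : v.val ∈ myUpos A) :
    myUpos (Equiv.swap u v * A) ⊆ myUpos A := by
  intro x hx
  obtain ⟨i, hpar, hval⟩ := mem_myUpos.mp hx
  simp only [Equiv.Perm.mul_apply] at hval
  by_cases h1 : A i = u
  · rw [h1, Equiv.swap_apply_left] at hval
    exact hval ▸ hv
  · by_cases h2 : A i = v
    · rw [h2, Equiv.swap_apply_right] at hval
      exact hval ▸ hu
    · rw [Equiv.swap_apply_of_ne_of_ne h1 h2] at hval
      exact mem_myUpos.mpr ⟨i, hpar, hval⟩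

lemma myUpos_swap {n : ℕ} (A : Equiv.Perm (Fin n)) (u v : Fin n)
    (hu : u.val ∈ myUpos A) (hv : v.val ∈ myUpos A) :
    myUpos (Equiv.swap u v * A) = myUpos A := by
  apply Finset.Subset.antisymm (myUpos_swap_subset A u v hu hv)
  have hb : Equiv.swap u v * (Equiv.swap u v * A) = A := by
    rw [← mul_assoc, Equiv.swap_mul_self, one_mul]
  have hu' : u.val ∈ myUpos (Equiv.swap u v * A) := by
    obtain ⟨i, hpar, hval⟩ := mem_myUpos.mp hv
    refine mem_myUpos.mpr ⟨i, hpar, ?_⟩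
    simp only [Equiv.Perm.mul_apply]
    rw [Fin.ext hval, Equiv.swap_apply_right]
  have hv' : v.val ∈ myUpos (Equiv.swap u v * A) := by
    obtain ⟨i, hpar, hval⟩ := mem_myUpos.mp hu
    refine mem_myUpos.mpr ⟨i, hpar, ?_⟩
    simp only [Equiv.Perm.mul_apply]
    rw [Fin.ext hval, Equiv.swap_apply_left]
  have := myUpos_swap_subset (Equiv.swap u v * A) u v hu' hv'
  rwa [hb] at this

/-- starts of consecutive pairs in `myUpos` -/
def myCS {n : ℕ} (A : Equiv.Perm (Fin n)) : Finset ℕ :=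
  (myUpos A).filter fun x => x + 1 ∈ myUpos A

/-- the least start of a consecutive pair (0 if none) -/
def myW {n : ℕ} (A : Equiv.Perm (Fin n)) : ℕ :=
  if h : (myCS A).Nonempty then (myCS A).min' h else 0

/-- the involution: swap the values `myW A` and `myW A + 1` -/
def gmap {n : ℕ} (hn : 0 < n) (A : Equiv.Perm (Fin n)) : Equiv.Perm (Fin n) :=
  Equiv.swap ⟨myW A % n, Nat.mod_lt _ hn⟩ ⟨(myW A + 1) % n, Nat.mod_lt _ hn⟩ * A

section main
variable {n m : ℕ} (hnm : n = 2 * m + 1) {A : Equiv.Perm (Fin n)} (hA : ¬IsPAP A)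

include hnm hA

lemma myCS_nonempty : (myCS A).Nonempty := by
  obtain ⟨x, hx1, hx2⟩ := exists_consec hnm hA
  exact ⟨x, Finset.mem_filter.mpr ⟨hx1, hx2⟩⟩

lemma myW_mem : myW A ∈ myUpos A ∧ myW A + 1 ∈ myUpos A := by
  have h := myCS_nonempty hnm hA
  have : myW A ∈ myCS A := by
    rw [myW, dif_pos h]
    exact (myCS A).min'_mem h
  exact Finset.mem_filter.mp this

lemma myW_lt : myW A + 1 < n :=
  mem_myUpos_lt (myW_mem hnm hA).2

lemma gmap_eq (hn : 0 < n) :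
    gmap hn A = Equiv.swap ⟨myW A, by have := myW_lt hnm hA; omega⟩
      ⟨myW A + 1, myW_lt hnm hA⟩ * A := by
  have h1 : myW A % n = myW A := Nat.mod_eq_of_lt (by have := myW_lt hnm hA; omega)
  have h2 : (myW A + 1) % n = myW A + 1 := Nat.mod_eq_of_lt (myW_lt hnm hA)
  have ha : (⟨myW A % n, Nat.mod_lt _ hn⟩ : Fin n)
      = ⟨myW A, by have := myW_lt hnm hA; omega⟩ := Fin.ext h1
  have hb : (⟨(myW A + 1) % n, Nat.mod_lt _ hn⟩ : Fin n)
      = ⟨myW A + 1, myW_lt hnm hA⟩ := Fin.ext h2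
  rw [gmap, ha, hb]

lemma gmap_myUpos (hn : 0 < n) : myUpos (gmap hn A) = myUpos A := by
  rw [gmap_eq hnm hA hn]
  exact myUpos_swap A _ _ (myW_mem hnm hA).1 (myW_mem hnm hA).2

lemma gmap_not_isPAP (hn : 0 < n) : ¬IsPAP (gmap hn A) := by
  intro hP
  have hU := gmap_myUpos hnm hA hn
  rw [isPAP_myUpos hnm hP] at hU
  have h1 := (myW_mem hnm hA).1
  have h2 := (myW_mem hnm hA).2
  rw [← hU, Finset.mem_filter] at h1 h2
  omega

lemma gmap_ascents (hn : 0 < n) : ascents (gmap hn A) = ascents A := by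
  rw [gmap_eq hnm hA hn]
  apply ascents_swap A _ _ rfl
  · exact mem_myUpos_iff_inv.mp (myW_mem hnm hA).1
  · exact mem_myUpos_iff_inv.mp (myW_mem hnm hA).2

lemma gmap_invNum (hn : 0 < n) : Odd (invNum (gmap hn A) + invNum A) := by
  rw [gmap_eq hnm hA hn]
  apply invNum_swap_parity A _ _ rfl
  · exact mem_myUpos_iff_inv.mp (myW_mem hnm hA).1
  · exact mem_myUpos_iff_inv.mp (myW_mem hnm hA).2

lemma gmap_gmap (hn : 0 < n) : gmap hn (gmap hn A) = A := by
  have hU := gmap_myUpos hnm hA hn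
  have hW : myW (gmap hn A) = myW A := by
    rw [myW, myW, myCS, myCS, hU]
  have ha : (⟨myW (gmap hn A) % n, Nat.mod_lt _ hn⟩ : Fin n)
      = ⟨myW A % n, Nat.mod_lt _ hn⟩ := Fin.ext (by rw [hW])
  have hb : (⟨(myW (gmap hn A) + 1) % n, Nat.mod_lt _ hn⟩ : Fin n)
      = ⟨(myW A + 1) % n, Nat.mod_lt _ hn⟩ := Fin.ext (by rw [hW])
  conv_lhs => rw [gmap, ha, hb, gmap]
  rw [← mul_assoc, Equiv.swap_mul_self, one_mul]

end main
theorem eulerSigned_eq_papSigned_of_odd (n k : ℕ) (hn : Odd n) (hk : k ≤ n - 1) :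
    eulerSigned n k = papSigned n k := by
  obtain ⟨m, hnm⟩ := hn
  have hn0 : 0 < n := by omega
  set s : Finset (Equiv.Perm (Fin n)) :=
    univ.filter (fun A => ¬IsPAP A ∧ ascents A = k) with hs
  have hmem : ∀ A ∈ s, ¬IsPAP A ∧ ascents A = k := by
    intro A ha
    exact (Finset.mem_filter.mp ha).2
  have hsum : ∑ A ∈ s, (if Even (invNum A) then (1:ℤ) else -1) = 0 := by
    apply Finset.sum_involution (fun A _ => gmap hn0 A)
    · intro A ha
      have hA := (hmem A ha).1
      have hodd := gmap_invNum hnm hA hn0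
      rw [Nat.odd_iff] at hodd
      have hne : ¬(Even (invNum A) ↔ Even (invNum (gmap hn0 A))) := by
        rw [Nat.even_iff, Nat.even_iff]
        omega
      split_ifs with h1 h2 h2
      · exact absurd (iff_of_true h1 h2) hne
      · ring
      · ring
      · exact absurd (iff_of_false h1 h2) hne
    · intro A ha _
      intro heq
      have hA := (hmem A ha).1
      have hodd := gmap_invNum hnm hA hn0
      rw [heq, Nat.odd_iff] at hodd
      omega
    · intro A ha
      have hA := (hmem A ha).1
      rw [hs, Finset.mem_filter]
      exact ⟨Finset.mem_univ _,
        gmap_not_isPAP hnm hA hn0, by rw [gmap_ascents hnm hA hn0]; exact (hmem A ha).2⟩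
    · intro A ha
      exact gmap_gmap hnm (hmem A ha).1 hn0
  have split : ∀ (P : Equiv.Perm (Fin n) → Prop) (_ : DecidablePred P),
      (univ.filter fun A => ascents A = k ∧ P A).card
        = (univ.filter fun A => IsPAP A ∧ ascents A = k ∧ P A).card
          + (s.filter fun A => P A).card := by
    intro P _
    rw [hs, Finset.filter_filter]
    rw [← Finset.card_filter_add_card_filter_not
      (s := univ.filter fun A => ascents A = k ∧ P A) (p := fun A => IsPAP A),
      Finset.filter_filter, Finset.filter_filter]
    congr 1
    · congr 1
      ext A
      simp only [Finset.mem_filter, Finset.mem_univ, true_and]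
      tauto
    · congr 1
      ext A
      simp only [Finset.mem_filter, Finset.mem_univ, true_and]
      tauto
  have hsum2 : ∑ A ∈ s, (if Even (invNum A) then (1:ℤ) else -1)
      = ((s.filter fun A => Even (invNum A)).card : ℤ)
        - ((s.filter fun A => Odd (invNum A)).card : ℤ) := by
    rw [← Finset.sum_filter_add_sum_filter_not s (fun A => Even (invNum A))]
    have h1 : ∀ A ∈ s.filter (fun A => Even (invNum A)),
        (if Even (invNum A) then (1:ℤ) else -1) = 1 :=
      fun A hA => if_pos (Finset.mem_filter.mp hA).2
    have h2 : ∀ A ∈ s.filter (fun A => ¬Even (invNum A)),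
        (if Even (invNum A) then (1:ℤ) else -1) = -1 :=
      fun A hA => if_neg (Finset.mem_filter.mp hA).2
    rw [Finset.sum_congr rfl h1, Finset.sum_congr rfl h2,
      Finset.sum_const, Finset.sum_const]
    have h3 : s.filter (fun A => ¬Even (invNum A)) = s.filter (fun A => Odd (invNum A)) :=
      Finset.filter_congr fun A _ => Nat.not_even_iff_odd
    rw [h3]
    push_cast
    ring
  have hE := split (fun A => Even (invNum A)) inferInstance
  have hO := split (fun A => Odd (invNum A)) inferInstance
  have hz : ((s.filter fun A => Even (invNum A)).card : ℤ)
      - ((s.filter fun A => Odd (invNum A)).card : ℤ) = 0 := by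
    rw [← hsum2]; exact hsum
  show (eulerEven n k : ℤ) - eulerOdd n k = (papEven n k : ℤ) - papOdd n k
  unfold eulerEven eulerOdd papEven papOdd
  rw [hE, hO]
  push_cast
  linarith
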